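/- Let G be a countable abelian group with [G:2G] = ℓ < ∞, |ker(D)| = r < ∞, and coset representatives g₁ = 0, g₂, ..., g_ℓ with G the disjoint union of gᵢ + 2G. If Ψ is a Følner sequence in G and F_N = ⋃ᵢ (gᵢ + 2Ψ_N), then (F_N) is also a Følner sequence in G. -/

import Mathlib

open Filter Pointwise
open scoped Classical

/-- The doubling map `g ↦ g + g` as an additive homomorphism. -/
def doubleHom (G : Type*) [AddCommGroup G] : G →+ G where
  toFun g := g + g
  map_zero' := by simp
  map_add' := by intro a b; abel

/-- The subgroup `2G = {g + g : g ∈ G}`. -/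
def twoG (G : Type*) [AddCommGroup G] : AddSubgroup G := (doubleHom G).range

/-- A Følner sequence: finite sets with `|Φ_N ∩ (g + Φ_N)|/|Φ_N| → 1` for every `g`. -/
def IsFolner {G : Type*} [AddCommGroup G] (Φ : ℕ → Finset G) : Prop :=
  ∀ g : G, Tendsto
    (fun N => (((Φ N) ∩ (Φ N).image (fun x => g + x)).card : ℝ) / ((Φ N).card : ℝ))
    atTop (nhds 1)

lemma doubleHom_apply {G : Type*} [AddCommGroup G] (x : G) : doubleHom G x = x + x := rfl

lemma mem_twoG_iff {G : Type*} [AddCommGroup G] {z : G} : z ∈ twoG G ↔ ∃ y, y + y = z := by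
  simp [twoG, AddMonoidHom.mem_range, doubleHom_apply]

/-- Fiber bound: `|S| ≤ r * |2S|`. -/
lemma card_le_r_mul_card_image {G : Type*} [AddCommGroup G] {r : ℕ} (hr : 0 < r)
    (hker : Nat.card (doubleHom G).ker = r) (S : Finset G) :
    S.card ≤ r * (S.image (fun x => x + x)).card := by
  have hfin : Finite (doubleHom G).ker := Nat.finite_of_card_ne_zero (by omega)
  haveI : Fintype (doubleHom G).ker := Fintype.ofFinite _
  apply Finset.card_le_mul_card_image
  intro a ha
  obtain ⟨x₀, _, hx₀⟩ := Finset.mem_image.mp ha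
  have hsub : (S.filter (fun x => x + x = a)) ⊆
      (((doubleHom G).ker : Set G).toFinset).image (fun z => z + x₀) := by
    intro x hx
    obtain ⟨-, hx2⟩ := Finset.mem_filter.mp hx
    refine Finset.mem_image.mpr ⟨x - x₀, ?_, by abel⟩
    rw [Set.mem_toFinset]
    show x - x₀ ∈ (doubleHom G).ker
    rw [AddMonoidHom.mem_ker, doubleHom_apply]
    have h2 : x + x = x₀ + x₀ := by rw [hx2, hx₀]
    calc (x - x₀) + (x - x₀) = (x + x) - (x₀ + x₀) := by abel
      _ = 0 := by rw [h2]; simp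
  calc (S.filter (fun x => x + x = a)).card
      ≤ (((doubleHom G).ker : Set G).toFinset).card :=
        le_trans (Finset.card_le_card hsub) Finset.card_image_le
    _ = r := by rw [Set.toFinset_card, ← Nat.card_eq_fintype_card]; exact hker

set_option maxHeartbeats 1000000 in
theorem stmt10 (G : Type*) [AddCommGroup G] [Countable G] (ℓ r : ℕ)
    (hℓ : 0 < ℓ) (hr : 0 < r)
    (g : Fin ℓ → G) (hg0 : g ⟨0, hℓ⟩ = 0)
    (hcover : ∀ x : G, ∃! i : Fin ℓ, x - g i ∈ twoG G)
    (hker : Nat.card (doubleHom G).ker = r)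
    (Ψ : ℕ → Finset G) (hΨ : IsFolner Ψ) :
    IsFolner (fun N =>
      Finset.univ.biUnion (fun i : Fin ℓ =>
        ((Ψ N).image (fun x => x + x)).image (fun y => g i + y))) := by
  classical
  set F : ℕ → Finset G := fun N => Finset.univ.biUnion (fun i : Fin ℓ =>
      ((Ψ N).image (fun x => x + x)).image (fun y => g i + y)) with hFdef
  intro h
  have huniq : ∀ z : G, ∀ i i' : Fin ℓ, z - g i ∈ twoG G → z - g i' ∈ twoG G → i = i' := by
    intro z i i' hi hi'
    obtain ⟨m, -, hm⟩ := hcover z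
    rw [hm i hi, hm i' hi']
  obtain ⟨j, hj, -⟩ := hcover h
  obtain ⟨k, hk⟩ := mem_twoG_iff.mp hj
  choose σ hσ using fun i => (hcover (g i + g j)).exists
  choose c hc using fun i => mem_twoG_iff.mp (hσ i)
  have hσinj : Function.Injective σ := by
    intro i i' hii
    apply huniq (g i) i i'
    · exact mem_twoG_iff.mpr ⟨0, by simp⟩
    · refine mem_twoG_iff.mpr ⟨c i - c i', ?_⟩
      calc (c i - c i') + (c i - c i') = (c i + c i) - (c i' + c i') := by abel
        _ = (g i + g j - g (σ i)) - (g i' + g j - g (σ i')) := by rw [hc i, hc i']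
        _ = g i - g i' := by rw [hii]; abel
  set t : Fin ℓ → G := fun i => c i + k with htdef
  have hPdisj : ∀ N, ∀ i i' : Fin ℓ, i ≠ i' →
      Disjoint (((Ψ N).image (fun x => x + x)).image (fun y => g i + y))
               (((Ψ N).image (fun x => x + x)).image (fun y => g i' + y)) := by
    intro N i i' hne
    rw [Finset.disjoint_left]
    rintro z hz hz'
    simp only [Finset.mem_image] at hz hz'
    obtain ⟨y, ⟨x, hx, rfl⟩, rfl⟩ := hz
    obtain ⟨y', ⟨x', hx', rfl⟩, he⟩ := hz'
    exact hne (huniq (g i + (x + x)) i i'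
      (mem_twoG_iff.mpr ⟨x, by abel⟩)
      (mem_twoG_iff.mpr ⟨x', by rw [← he]; abel⟩))
  have hFcard : ∀ N, (F N).card = ℓ * ((Ψ N).image (fun x => x + x)).card := by
    intro N
    rw [hFdef]
    rw [Finset.card_biUnion (fun i _ i' _ hne => hPdisj N i i' hne)]
    have hci : ∀ i : Fin ℓ, (((Ψ N).image (fun x => x + x)).image (fun y => g i + y)).card
        = ((Ψ N).image (fun x => x + x)).card :=
      fun i => Finset.card_image_of_injective _ (add_right_injective _)
    simp only [hci, Finset.sum_const, Finset.card_univ, Fintype.card_fin, smul_eq_mul]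
  have key : ∀ N, ∑ i : Fin ℓ,
      ((Ψ N ∩ (Ψ N).image (fun x => t i + x)).image (fun x => x + x)).card
      ≤ ((F N) ∩ (F N).image (fun x => h + x)).card := by
    intro N
    set Q : Fin ℓ → Finset G := fun i =>
      ((Ψ N ∩ (Ψ N).image (fun x => t i + x)).image (fun x => x + x)).image
        (fun y => g (σ i) + y) with hQ
    have hQP : ∀ i, Q i ⊆ ((Ψ N).image (fun x => x + x)).image (fun y => g (σ i) + y) := by
      intro i
      exact Finset.image_subset_image (Finset.image_subset_image Finset.inter_subset_left)
    have hQdisj : ∀ i ∈ (Finset.univ : Finset (Fin ℓ)), ∀ i' ∈ Finset.univ, i ≠ i' →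
        Disjoint (Q i) (Q i') := by
      intro i _ i' _ hne
      exact Finset.disjoint_of_subset_left (hQP i) (Finset.disjoint_of_subset_right (hQP i')
        (hPdisj N (σ i) (σ i') (fun e => hne (hσinj e))))
    have hcard : ∀ i, (Q i).card =
        ((Ψ N ∩ (Ψ N).image (fun x => t i + x)).image (fun x => x + x)).card :=
      fun i => Finset.card_image_of_injective _ (add_right_injective _)
    calc ∑ i : Fin ℓ,
        ((Ψ N ∩ (Ψ N).image (fun x => t i + x)).image (fun x => x + x)).card
        = ∑ i : Fin ℓ, (Q i).card := by simp [hcard]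
      _ = (Finset.univ.biUnion Q).card := (Finset.card_biUnion hQdisj).symm
      _ ≤ ((F N) ∩ (F N).image (fun x => h + x)).card := by
          apply Finset.card_le_card
          simp only [hFdef]
          rw [Finset.biUnion_subset]
          intro i _
          apply Finset.subset_inter
          · exact (hQP i).trans (Finset.subset_biUnion_of_mem
              (fun i : Fin ℓ => ((Ψ N).image (fun x => x + x)).image (fun y => g i + y))
              (Finset.mem_univ (σ i)))
          · intro z hz
            simp only [hQ, Finset.mem_image, Finset.mem_inter] at hz
            obtain ⟨y, ⟨w, ⟨hwΨ, hw2⟩, rfl⟩, rfl⟩ := hz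
            obtain ⟨u, hu, huw⟩ := hw2
            refine Finset.mem_image.mpr ⟨g i + (u + u), ?_, ?_⟩
            · refine Finset.mem_biUnion.mpr ⟨i, Finset.mem_univ i, ?_⟩
              exact Finset.mem_image.mpr ⟨u + u, Finset.mem_image.mpr ⟨u, hu, rfl⟩, rfl⟩
            · rw [← huw]
              calc h + (g i + (u + u))
                  = (h - g j) + (g i + g j - g (σ i)) + g (σ i) + (u + u) := by abel
                _ = (k + k) + (c i + c i) + g (σ i) + (u + u) := by rw [hk, hc i]
                _ = g (σ i) + ((t i + u) + (t i + u)) := by simp only [htdef]; abel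
  have hp0 : ∀ᶠ N in atTop, 0 < (Ψ N).card := by
    filter_upwards [(hΨ 0).eventually (eventually_gt_nhds (by norm_num : (0:ℝ) < 1))]
      with N hN
    by_contra hc0
    push_neg at hc0
    rw [Nat.le_zero] at hc0
    rw [hc0] at hN
    norm_num at hN
  have hE : Tendsto (fun N => 1 - ((r:ℝ)/ℓ) * ∑ i : Fin ℓ,
      (1 - ((Ψ N ∩ (Ψ N).image (fun x => t i + x)).card : ℝ) / ((Ψ N).card : ℝ)))
      atTop (nhds 1) := by
    have hsum0 : Tendsto (fun N => ∑ i : Fin ℓ,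
        (1 - ((Ψ N ∩ (Ψ N).image (fun x => t i + x)).card : ℝ) / ((Ψ N).card : ℝ)))
        atTop (nhds 0) := by
      have := tendsto_finset_sum (Finset.univ : Finset (Fin ℓ))
        (fun i _ => (tendsto_const_nhds (x := (1:ℝ))).sub (hΨ (t i)))
      simpa using this
    have := (tendsto_const_nhds (x := (1:ℝ))).sub (hsum0.const_mul ((r:ℝ)/ℓ))
    simpa using this
  apply tendsto_of_tendsto_of_tendsto_of_le_of_le' hE tendsto_const_nhds
  · filter_upwards [hp0] with N hpN
    have hℓR : ((ℓ:ℝ)) ≠ 0 := by positivity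
    have hp : (0:ℝ) < ((Ψ N).card : ℝ) := by exact_mod_cast hpN
    have hq : (0:ℝ) < (((Ψ N).image (fun x => x + x)).card : ℝ) := by
      have hne : ((Ψ N).image (fun x => x + x)).Nonempty :=
        (Finset.card_pos.mp hpN).image _
      exact_mod_cast Finset.card_pos.mpr hne
    set p : ℝ := ((Ψ N).card : ℝ) with hpdef
    set q : ℝ := (((Ψ N).image (fun x => x + x)).card : ℝ) with hqdef
    have hpq : p ≤ r * q := by
      rw [hpdef, hqdef]
      exact_mod_cast card_le_r_mul_card_image hr hker (Ψ N)
    have hb : ((F N).card : ℝ) = ℓ * q := by rw [hFcard N]; push_cast; rfl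
    have hper : ∀ i : Fin ℓ,
        q - (r * q) * (1 - ((Ψ N ∩ (Ψ N).image (fun x => t i + x)).card : ℝ)/p)
        ≤ (((Ψ N ∩ (Ψ N).image (fun x => t i + x)).image (fun x => x + x)).card : ℝ) := by
      intro i
      set s : ℝ := ((Ψ N ∩ (Ψ N).image (fun x => t i + x)).card : ℝ) with hsdef
      have hs_le : s ≤ p := by
        rw [hsdef, hpdef]
        exact_mod_cast Finset.card_le_card Finset.inter_subset_left
      have hs0 : (0:ℝ) ≤ s := by rw [hsdef]; positivity
      have himg : q ≤
          (((Ψ N ∩ (Ψ N).image (fun x => t i + x)).image (fun x => x + x)).card : ℝ)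
          + (p - s) := by
        have hsub : (Ψ N).image (fun x => x + x) ⊆
            ((Ψ N ∩ (Ψ N).image (fun x => t i + x)).image (fun x => x + x)) ∪
            ((Ψ N \ (Ψ N ∩ (Ψ N).image (fun x => t i + x))).image (fun x => x + x)) := by
          rw [← Finset.image_union]
          apply Finset.image_subset_image
          intro x hx
          rw [Finset.mem_union, Finset.mem_sdiff]
          by_cases hx2 : x ∈ Ψ N ∩ (Ψ N).image (fun x => t i + x)
          · exact Or.inl hx2
          · exact Or.inr ⟨hx, hx2⟩
        have h1 : ((Ψ N).image (fun x => x + x)).card ≤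
            ((Ψ N ∩ (Ψ N).image (fun x => t i + x)).image (fun x => x + x)).card +
            (Ψ N \ (Ψ N ∩ (Ψ N).image (fun x => t i + x))).card :=
          le_trans (Finset.card_le_card hsub) (le_trans (Finset.card_union_le _ _)
            (Nat.add_le_add_left Finset.card_image_le _))
        rw [Finset.card_sdiff_of_subset Finset.inter_subset_left] at h1
        have h2 := (Nat.cast_le (α := ℝ)).mpr h1
        rw [Nat.cast_add, Nat.cast_sub (Finset.card_le_card Finset.inter_subset_left)] at h2
        rw [hqdef, hpdef, hsdef]
        exact h2
      have hps : p - s ≤ (r*q) * (1 - s/p) := by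
        have h1 : 1 - s/p = (p - s)/p := by field_simp
        rw [h1, ← mul_div_assoc, le_div_iff₀ hp]
        nlinarith [mul_le_mul_of_nonneg_left hpq (sub_nonneg.mpr hs_le)]
      linarith [himg, hps]
    have hmain : ∑ i : Fin ℓ,
        (q - (r*q)*(1 - ((Ψ N ∩ (Ψ N).image (fun x => t i + x)).card : ℝ)/p))
        ≤ (((F N) ∩ (F N).image (fun x => h + x)).card : ℝ) := by
      calc ∑ i : Fin ℓ,
          (q - (r*q)*(1 - ((Ψ N ∩ (Ψ N).image (fun x => t i + x)).card : ℝ)/p))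
          ≤ ∑ i : Fin ℓ,
            (((Ψ N ∩ (Ψ N).image (fun x => t i + x)).image (fun x => x + x)).card : ℝ) :=
            Finset.sum_le_sum (fun i _ => hper i)
        _ = ((∑ i : Fin ℓ,
            ((Ψ N ∩ (Ψ N).image (fun x => t i + x)).image (fun x => x + x)).card : ℕ) : ℝ) := by
            push_cast; rfl
        _ ≤ _ := by exact_mod_cast key N
    show 1 - ((r:ℝ)/ℓ) * ∑ i : Fin ℓ,
        (1 - ((Ψ N ∩ (Ψ N).image (fun x => t i + x)).card : ℝ) / ((Ψ N).card : ℝ))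
        ≤ (((F N) ∩ (F N).image (fun x => h + x)).card : ℝ) / ((F N).card : ℝ)
    rw [hb, le_div_iff₀ (mul_pos (by exact_mod_cast hℓ : (0:ℝ) < (ℓ:ℝ)) hq)]
    have hexp : (1 - ((r:ℝ)/ℓ) * ∑ i : Fin ℓ,
        (1 - ((Ψ N ∩ (Ψ N).image (fun x => t i + x)).card : ℝ)/p)) * ((ℓ:ℝ)*q)
        = ∑ i : Fin ℓ,
          (q - (r*q)*(1 - ((Ψ N ∩ (Ψ N).image (fun x => t i + x)).card : ℝ)/p)) := by
      simp only [Finset.sum_sub_distrib, ← Finset.mul_sum, Finset.sum_const,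
        Finset.card_univ, Fintype.card_fin, smul_eq_mul]
      field_simp
      ring
    rw [← hpdef]
    rw [hexp]
    exact hmain
  · filter_upwards with N
    apply div_le_one_of_le₀
    · exact_mod_cast Finset.card_le_card Finset.inter_subset_left
    · exact Nat.cast_nonneg _
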